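/- Let C assign a rational number C(m; (a,b)) to each pair of a finite tuple m of elements of (ℤ^{≥0})²∖{0} and a nonzero (a,b) ∈ (ℤ^{≥0})². Then there is at most one F, assigning a rational number F(m; (a,b)) to each pair of a (possibly empty) finite tuple m of elements of (ℤ^{≥0})²∖{0} and a nonzero (a,b) ∈ (ℤ^{≥0})², such that: F satisfies the divisor relations F(((1,0))⌢m; (a,b)) = a·F(m; (a,b)) and F(((0,1))⌢m; (a,b)) = b·F(m; (a,b)); F(m; d) = 0 whenever some entry mᵢ = (r,s) of m has r ≥ 3 or s ≥ 2; F(m; d) = 0 whenever k_d(m) is even; F(m; d) = 0 whenever k_d(m) < 0; F((); (0,1)) = 1; 2·F(((2,0)); (1,0)) = −1; F((); (1,1)) = 1; F satisfies recursion (A′) with complex input C at all admissible (r,d,m); F satisfies (B′) at every (a,b) ∈ (ℤ^{≥0})²∖{(0,0),(0,1)}; and F satisfies (C′) at every (a,b) ∈ (ℤ^{≥0})²∖{(0,0)}. That is, any two such F agree everywhere. -/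

import Mathlib

open Finset

/-- Binomial coefficient `C(n,k)` as a rational number, with the convention that
`C(n,k) = 0` whenever `k < 0` or `k > n`. -/
def binom (n k : ℤ) : ℚ :=
  if 0 ≤ k ∧ k ≤ n then (n.toNat.choose k.toNat : ℚ) else 0

/-- Elements of `(ℤ^{≥0})²`, written as functions on `Fin 2`. -/
abbrev V2 := Fin 2 → ℕ

/-- The vector `(2,1)`. -/
def topV : V2 := ![2, 1]

/-- All entries of the tuple `m` lie in `(ℤ^{≥0})² ∖ {0}`. -/
def posV2 (m : List V2) : Prop := ∀ v ∈ m, v ≠ 0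

/-- For `d = (a,b)` and a tuple `m = (m₁,…,m_l)` of elements of `(ℤ^{≥0})²`,
the number `k_d(m) = 2a + b + l − (|m₁| + ⋯ + |m_l|)` with `|(r,s)| = r + s`. -/
def kd2 (d : V2) (m : List V2) : ℤ :=
  2 * (d 0 : ℤ) + (d 1 : ℤ) + m.length - (((m.map fun v => v 0 + v 1).sum : ℕ) : ℤ)

/-- The subtuple of a tuple `m` indexed (in increasing order) by a set `S`
of positions. -/
def subt {α : Type*} (m : List α) (S : Finset (Fin m.length)) : List α :=
  (S.sort (· ≤ ·)).map m.get

/-- Vectors `d'` with `d' + d'' = d` for some `d''`, `d' ≠ 0`, `d'' ≠ 0`. -/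
def splitV2 (d : V2) : Finset V2 :=
  (Fintype.piFinset fun i => Finset.range (d i + 1)).filter
    fun d' => d' ≠ 0 ∧ (fun i => d i - d' i) ≠ (0 : V2)

/-- The nonzero vectors `i ∈ (ℤ^{≥0})²` with `(2,1) − i` nonzero. -/
def unitsV2 : Finset V2 :=
  (Fintype.piFinset fun s => Finset.range (topV s + 1)).filter
    fun i => i ≠ 0 ∧ i ≠ topV

/-- The term `T₀ = −2^{l−1} d_r C(m⌢((2,1)); d)` if `k_d(m) = 2`, and `0`
otherwise; the power `2^{l−1}` is taken in `ℚ`. -/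
def TAtw (C : List V2 → V2 → ℚ) (d : V2) (r : Fin 2) (m : List V2) : ℚ :=
  if kd2 d m = 2 then
    -((2 : ℚ) ^ ((m.length : ℤ) - 1)) * (d r : ℚ) * C (m ++ [topV]) d
  else 0

/-- The WDVV-type recursion (A′) for the real invariants of `((ℙ¹)³, φ₃')` at
`(r, d, m)` with `m = x :: t`: the sums over `(I,J) ∈ P(l)` are encoded by the
subsets `S` of the positions of `t` placed in `I` (so `m_I = x :: t_S`,
`m_J = t_{Sᶜ}` and `|I| = |S| + 1`). -/
def RecAtw (C F : List V2 → V2 → ℚ) (r : Fin 2) (d : V2) (x : V2) (t : List V2) : Prop :=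
  F ((x + Pi.single r 1) :: t) d =
    TAtw C d r (x :: t)
    - ∑ d' ∈ splitV2 d, (d' r : ℚ) *
        ∑ S : Finset (Fin t.length), (2 : ℚ) ^ S.card *
          ∑ i ∈ unitsV2,
            C ((x :: subt t S) ++ [i]) d'
              * F ((fun s => topV s - i s) :: subt t Sᶜ) (fun s => d s - d' s)
    + ∑ d' ∈ splitV2 d,
        ∑ S : Finset (Fin t.length),
          (((d r - d' r : ℕ) : ℚ) * binom (kd2 d (x :: t) - 2) (kd2 d' (x :: subt t S) - 1)
            - (d' r : ℚ) * binom (kd2 d (x :: t) - 2) (kd2 d' (x :: subt t S)))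
          * F (x :: subt t S) d' * F (subt t Sᶜ) (fun s => d s - d' s)

/-- Relation (B′) for the purely real point-counting invariants of
`((ℙ¹)³, φ₃')`. -/
def RelB (F : List V2 → V2 → ℚ) (a b : ℕ) : Prop :=
  (2 * (a : ℚ) - 1 - (b : ℚ)) * F [] ![a, b] =
    ∑ pq ∈ (Finset.HasAntidiagonal.antidiagonal a ×ˢ Finset.HasAntidiagonal.antidiagonal (b + 1)).filter
        (fun pq => 1 ≤ pq.1.1 ∧ 1 ≤ pq.1.2 ∧ 1 ≤ pq.2.1 ∧ 1 ≤ pq.2.2),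
      (pq.2.1 : ℚ)
        * ((pq.2.2 : ℚ)
              * binom (2 * (a : ℤ) + (b : ℤ) - 1) (2 * (pq.1.1 : ℤ) + (pq.2.1 : ℤ) - 1)
            - (pq.2.1 : ℚ)
              * binom (2 * (a : ℤ) + (b : ℤ) - 1) (2 * (pq.1.1 : ℤ) + (pq.2.1 : ℤ)))
        * F [] ![pq.1.1, pq.2.1] * F [] ![pq.1.2, pq.2.2]

/-- Relation (C′) for the purely real invariants of `((ℙ¹)³, φ₃')`, involving one
`H₁H₂`-insertion (recorded as `2 F(((2,0)); ·)`). -/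
def RelC (F : List V2 → V2 → ℚ) (a b : ℕ) : Prop :=
  ((b : ℚ) - 1) * F [] ![a, b] =
    ∑ pq ∈ (Finset.HasAntidiagonal.antidiagonal (a + 1) ×ˢ Finset.HasAntidiagonal.antidiagonal b).filter
        (fun pq => 1 ≤ pq.1.1 ∧ 1 ≤ pq.1.2 ∧ 1 ≤ pq.2.1 ∧ 1 ≤ pq.2.2),
      ((pq.1.1 : ℚ)
            * binom (2 * (a : ℤ) + (b : ℤ) - 1) (2 * (pq.1.1 : ℤ) + (pq.2.1 : ℤ) - 1)
          - (pq.1.2 : ℚ)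
            * binom (2 * (a : ℤ) + (b : ℤ) - 1) (2 * (pq.1.1 : ℤ) + (pq.2.1 : ℤ) - 2))
        * (2 * F [![2, 0]] ![pq.1.1, pq.2.1]) * F [] ![pq.1.2, pq.2.2]

/-- The full set of conditions on the real genus 0 invariants `F(m; d)` of
`((ℙ¹)³, φ₃')`: the divisor relations, the vanishing statements, the base
values, the recursion (A′), and the relations (B′) and (C′). -/
def GoodTw (C F : List V2 → V2 → ℚ) : Prop :=
  (∀ d : V2, d ≠ 0 → ∀ m : List V2, posV2 m →
      F (Pi.single 0 1 :: m) d = (d 0 : ℚ) * F m d)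
    ∧ (∀ d : V2, d ≠ 0 → ∀ m : List V2, posV2 m →
        F (Pi.single 1 1 :: m) d = (d 1 : ℚ) * F m d)
    ∧ (∀ d : V2, d ≠ 0 → ∀ m : List V2, posV2 m →
        (∃ v ∈ m, 3 ≤ v 0 ∨ 2 ≤ v 1) → F m d = 0)
    ∧ (∀ d : V2, d ≠ 0 → ∀ m : List V2, posV2 m → kd2 d m % 2 = 0 → F m d = 0)
    ∧ (∀ d : V2, d ≠ 0 → ∀ m : List V2, posV2 m → kd2 d m < 0 → F m d = 0)
    ∧ F [] ![0, 1] = 1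
    ∧ 2 * F [![2, 0]] ![1, 0] = -1
    ∧ F [] ![1, 1] = 1
    ∧ (∀ (r : Fin 2) (d : V2) (x : V2) (t : List V2), d ≠ 0 → posV2 (x :: t) →
        2 ≤ kd2 d (x :: t) → RecAtw C F r d x t)
    ∧ (∀ a b : ℕ, (a, b) ≠ (0, 0) → (a, b) ≠ (0, 1) → RelB F a b)
    ∧ (∀ a b : ℕ, (a, b) ≠ (0, 0) → RelC F a b)


section Helpers

lemma v2_zero_iff {v : V2} : v = 0 ↔ v 0 = 0 ∧ v 1 = 0 := by
  constructor
  · rintro rfl; exact ⟨rfl, rfl⟩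
  · rintro ⟨h0, h1⟩
    funext i
    fin_cases i
    · exact h0
    · exact h1

lemma posV2_nil : posV2 [] := fun v hv => absurd hv List.not_mem_nil

lemma posV2_cons {v : V2} {t : List V2} : posV2 (v :: t) ↔ v ≠ 0 ∧ posV2 t :=
  List.forall_mem_cons

lemma subt_pos {m : List V2} (h : posV2 m) (S : Finset (Fin m.length)) :
    posV2 (subt m S) := by
  intro v hv
  simp only [subt, List.mem_map] at hv
  obtain ⟨i, -, rfl⟩ := hv
  exact h _ (List.get_mem m i)

lemma splitV2_facts {d d' : V2} (h : d' ∈ splitV2 d) :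
    d' ≠ 0 ∧ (fun i => d i - d' i) ≠ (0 : V2) ∧
      d' 0 + d' 1 < d 0 + d 1 ∧ (d 0 - d' 0) + (d 1 - d' 1) < d 0 + d 1 := by
  simp only [splitV2, Finset.mem_filter, Fintype.mem_piFinset, Finset.mem_range] at h
  obtain ⟨hb, h1, h2⟩ := h
  have hb0 := hb 0
  have hb1 := hb 1
  have e1 : ¬ (d' 0 = 0 ∧ d' 1 = 0) := fun hc => h1 (v2_zero_iff.mpr hc)
  have e2 : ¬ (d 0 - d' 0 = 0 ∧ d 1 - d' 1 = 0) := fun hc => h2 (v2_zero_iff.mpr hc)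
  exact ⟨h1, h2, by omega, by omega⟩

lemma unitsV2_facts {i : V2} (h : i ∈ unitsV2) :
    (fun s => topV s - i s) ≠ (0 : V2) := by
  simp only [unitsV2, Finset.mem_filter, Fintype.mem_piFinset, Finset.mem_range] at h
  obtain ⟨hb, h0, ht⟩ := h
  intro hc
  apply ht
  funext s
  have h2 : topV s - i s = 0 := congrFun hc s
  have hbs := hb s
  omega

lemma kd2_nil (d : V2) : kd2 d [] = 2 * (d 0 : ℤ) + d 1 := by
  simp [kd2]

lemma kd2_cons (d v : V2) (t : List V2) :
    kd2 d (v :: t) = kd2 d t + 1 - ((v 0 + v 1 : ℕ) : ℤ) := by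
  simp only [kd2, List.map_cons, List.sum_cons, List.length_cons]
  push_cast
  ring

lemma single_sum (r : Fin 2) : (Pi.single r 1 : V2) 0 + (Pi.single r 1 : V2) 1 = 1 := by
  fin_cases r <;> simp [Pi.single_apply]

lemma pairV_ne {p q : ℕ} (hq : q ≠ 0) : (![p, q] : V2) ≠ 0 := by
  intro hc
  have := congrFun hc 1
  simp at this
  omega

lemma pairV_sum (p q : ℕ) : (![p, q] : V2) 0 + (![p, q] : V2) 1 = p + q := by
  simp

lemma relB_rhs_eq (F F' : List V2 → V2 → ℚ) (a b : ℕ)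
    (IH : ∀ d' : V2, d' 0 + d' 1 < a + b → d' ≠ 0 → ∀ m', posV2 m' → F m' d' = F' m' d') :
    (∑ pq ∈ (Finset.HasAntidiagonal.antidiagonal a ×ˢ Finset.HasAntidiagonal.antidiagonal (b + 1)).filter
        (fun pq => 1 ≤ pq.1.1 ∧ 1 ≤ pq.1.2 ∧ 1 ≤ pq.2.1 ∧ 1 ≤ pq.2.2),
      (pq.2.1 : ℚ)
        * ((pq.2.2 : ℚ)
              * binom (2 * (a : ℤ) + (b : ℤ) - 1) (2 * (pq.1.1 : ℤ) + (pq.2.1 : ℤ) - 1)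
            - (pq.2.1 : ℚ)
              * binom (2 * (a : ℤ) + (b : ℤ) - 1) (2 * (pq.1.1 : ℤ) + (pq.2.1 : ℤ)))
        * F [] ![pq.1.1, pq.2.1] * F [] ![pq.1.2, pq.2.2]) =
    (∑ pq ∈ (Finset.HasAntidiagonal.antidiagonal a ×ˢ Finset.HasAntidiagonal.antidiagonal (b + 1)).filter
        (fun pq => 1 ≤ pq.1.1 ∧ 1 ≤ pq.1.2 ∧ 1 ≤ pq.2.1 ∧ 1 ≤ pq.2.2),
      (pq.2.1 : ℚ)
        * ((pq.2.2 : ℚ)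
              * binom (2 * (a : ℤ) + (b : ℤ) - 1) (2 * (pq.1.1 : ℤ) + (pq.2.1 : ℤ) - 1)
            - (pq.2.1 : ℚ)
              * binom (2 * (a : ℤ) + (b : ℤ) - 1) (2 * (pq.1.1 : ℤ) + (pq.2.1 : ℤ)))
        * F' [] ![pq.1.1, pq.2.1] * F' [] ![pq.1.2, pq.2.2]) := by
  refine Finset.sum_congr rfl fun pq hpq => ?_
  simp only [Finset.mem_filter, Finset.mem_product, Finset.HasAntidiagonal.mem_antidiagonal] at hpq
  obtain ⟨⟨e1, e2⟩, l1, l2, l3, l4⟩ := hpq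
  rw [IH ![pq.1.1, pq.2.1] (by rw [pairV_sum]; omega) (pairV_ne (by omega)) [] posV2_nil,
    IH ![pq.1.2, pq.2.2] (by rw [pairV_sum]; omega) (pairV_ne (by omega)) [] posV2_nil]

lemma relC_rhs_eq (F F' : List V2 → V2 → ℚ) (a b : ℕ)
    (IH : ∀ d' : V2, d' 0 + d' 1 < a + b → d' ≠ 0 → ∀ m', posV2 m' → F m' d' = F' m' d') :
    (∑ pq ∈ (Finset.HasAntidiagonal.antidiagonal (a + 1) ×ˢ Finset.HasAntidiagonal.antidiagonal b).filter
        (fun pq => 1 ≤ pq.1.1 ∧ 1 ≤ pq.1.2 ∧ 1 ≤ pq.2.1 ∧ 1 ≤ pq.2.2),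
      ((pq.1.1 : ℚ)
            * binom (2 * (a : ℤ) + (b : ℤ) - 1) (2 * (pq.1.1 : ℤ) + (pq.2.1 : ℤ) - 1)
          - (pq.1.2 : ℚ)
            * binom (2 * (a : ℤ) + (b : ℤ) - 1) (2 * (pq.1.1 : ℤ) + (pq.2.1 : ℤ) - 2))
        * (2 * F [![2, 0]] ![pq.1.1, pq.2.1]) * F [] ![pq.1.2, pq.2.2]) =
    (∑ pq ∈ (Finset.HasAntidiagonal.antidiagonal (a + 1) ×ˢ Finset.HasAntidiagonal.antidiagonal b).filter
        (fun pq => 1 ≤ pq.1.1 ∧ 1 ≤ pq.1.2 ∧ 1 ≤ pq.2.1 ∧ 1 ≤ pq.2.2),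
      ((pq.1.1 : ℚ)
            * binom (2 * (a : ℤ) + (b : ℤ) - 1) (2 * (pq.1.1 : ℤ) + (pq.2.1 : ℤ) - 1)
          - (pq.1.2 : ℚ)
            * binom (2 * (a : ℤ) + (b : ℤ) - 1) (2 * (pq.1.1 : ℤ) + (pq.2.1 : ℤ) - 2))
        * (2 * F' [![2, 0]] ![pq.1.1, pq.2.1]) * F' [] ![pq.1.2, pq.2.2]) := by
  refine Finset.sum_congr rfl fun pq hpq => ?_
  simp only [Finset.mem_filter, Finset.mem_product, Finset.HasAntidiagonal.mem_antidiagonal] at hpq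
  obtain ⟨⟨e1, e2⟩, l1, l2, l3, l4⟩ := hpq
  have hpos20 : posV2 [![2, 0]] := by
    intro v hv
    simp only [List.mem_singleton] at hv
    subst hv
    intro hc
    have := congrFun hc 0
    simp at this
  rw [IH ![pq.1.1, pq.2.1] (by rw [pairV_sum]; omega) (pairV_ne (by omega)) [![2, 0]] hpos20,
    IH ![pq.1.2, pq.2.2] (by rw [pairV_sum]; omega) (pairV_ne (by omega)) [] posV2_nil]

lemma recStep (C F F' : List V2 → V2 → ℚ)
    (vParF : ∀ d : V2, d ≠ 0 → ∀ m : List V2, posV2 m → kd2 d m % 2 = 0 → F m d = 0)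
    (vNegF : ∀ d : V2, d ≠ 0 → ∀ m : List V2, posV2 m → kd2 d m < 0 → F m d = 0)
    (recF : ∀ (r : Fin 2) (d : V2) (x : V2) (t : List V2), d ≠ 0 → posV2 (x :: t) →
        2 ≤ kd2 d (x :: t) → RecAtw C F r d x t)
    (vParF' : ∀ d : V2, d ≠ 0 → ∀ m : List V2, posV2 m → kd2 d m % 2 = 0 → F' m d = 0)
    (vNegF' : ∀ d : V2, d ≠ 0 → ∀ m : List V2, posV2 m → kd2 d m < 0 → F' m d = 0)
    (recF' : ∀ (r : Fin 2) (d : V2) (x : V2) (t : List V2), d ≠ 0 → posV2 (x :: t) →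
        2 ≤ kd2 d (x :: t) → RecAtw C F' r d x t)
    (r : Fin 2) (d x : V2) (t : List V2) (hd : d ≠ 0) (hx : x ≠ 0) (ht : posV2 t)
    (IH : ∀ d' : V2, d' 0 + d' 1 < d 0 + d 1 → d' ≠ 0 →
        ∀ m' : List V2, posV2 m' → F m' d' = F' m' d') :
    F ((x + Pi.single r 1) :: t) d = F' ((x + Pi.single r 1) :: t) d := by
  have hxt : posV2 (x :: t) := posV2_cons.mpr ⟨hx, ht⟩
  by_cases hk : 2 ≤ kd2 d (x :: t)
  · have hA := recF r d x t hd hxt hk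
    have hA' := recF' r d x t hd hxt hk
    unfold RecAtw at hA hA'
    rw [hA, hA']
    congr 1
    · congr 1
      refine Finset.sum_congr rfl fun d' hd' => ?_
      obtain ⟨hne, hne'', hlt, hlt''⟩ := splitV2_facts hd'
      congr 1
      refine Finset.sum_congr rfl fun S _ => ?_
      congr 1
      refine Finset.sum_congr rfl fun i hi => ?_
      congr 1
      exact IH _ hlt'' hne'' _ (posV2_cons.mpr ⟨unitsV2_facts hi, subt_pos ht _⟩)
    · refine Finset.sum_congr rfl fun d' hd' => Finset.sum_congr rfl fun S _ => ?_
      obtain ⟨hne, hne'', hlt, hlt''⟩ := splitV2_facts hd'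
      rw [IH d' hlt hne _ (posV2_cons.mpr ⟨hx, subt_pos ht _⟩),
        IH _ hlt'' hne'' _ (subt_pos ht _)]
  · push_neg at hk
    have hhne : (x + Pi.single r 1 : V2) ≠ 0 := by
      intro hc
      have h2 := congrFun hc r
      simp [Pi.add_apply] at h2
    have hpxt : posV2 ((x + Pi.single r 1) :: t) := posV2_cons.mpr ⟨hhne, ht⟩
    have hsum : (x + Pi.single r 1 : V2) 0 + (x + Pi.single r 1 : V2) 1
        = x 0 + x 1 + 1 := by
      have := single_sum r
      simp only [Pi.add_apply]
      omega
    have e1 := kd2_cons d (x + Pi.single r 1) t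
    have e2 := kd2_cons d x t
    have hk0 : kd2 d ((x + Pi.single r 1) :: t) ≤ 0 := by
      rw [e1]; rw [e2] at hk; omega
    rcases hk0.lt_or_eq with hlt | heq
    · rw [vNegF d hd _ hpxt hlt, vNegF' d hd _ hpxt hlt]
    · rw [vParF d hd _ hpxt (by omega), vParF' d hd _ hpxt (by omega)]

end Helpers

/-- There is at most one function `F` on pairs of a tuple of nonzero vectors and
a nonzero degree satisfying all the conditions of `GoodTw`. -/
theorem stmt_19 (C F F' : List V2 → V2 → ℚ)
    (hF : GoodTw C F) (hF' : GoodTw C F') :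
    ∀ d : V2, d ≠ 0 → ∀ m : List V2, posV2 m → F m d = F' m d := by
  obtain ⟨d1F, d2F, vBigF, vParF, vNegF, b1F, b2F, b3F, recF, relBF, relCF⟩ := hF
  obtain ⟨d1F', d2F', vBigF', vParF', vNegF', b1F', b2F', b3F', recF', relBF', relCF'⟩ := hF'
  suffices key : ∀ n : ℕ, ∀ d : V2, d 0 + d 1 = n → d ≠ 0 →
      ∀ m : List V2, posV2 m → F m d = F' m d by
    exact fun d hd m hm => key (d 0 + d 1) d rfl hd m hm
  intro n
  induction n using Nat.strong_induction_on with
  | _ n ihn =>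
  intro d hdn hd m
  have IH : ∀ d' : V2, d' 0 + d' 1 < d 0 + d 1 → d' ≠ 0 →
      ∀ m' : List V2, posV2 m' → F m' d' = F' m' d' := by
    intro d' hlt
    exact ihn _ (hdn ▸ hlt) d' rfl
  induction m with
  | nil =>
    intro _
    by_cases hpar : d 1 % 2 = 0
    · rw [vParF d hd [] posV2_nil (by rw [kd2_nil]; omega),
        vParF' d hd [] posV2_nil (by rw [kd2_nil]; omega)]
    · by_cases hb01 : d 0 = 0 ∧ d 1 = 1
      · have hde : d = ![0, 1] := by
          funext i; fin_cases i <;> simp [hb01.1, hb01.2]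
        rw [hde, b1F, b1F']
      · by_cases hb11 : d 0 = 1 ∧ d 1 = 1
        · have hde : d = ![1, 1] := by
            funext i; fin_cases i <;> simp [hb11.1, hb11.2]
          rw [hde, b3F, b3F']
        · have hde : (![d 0, d 1] : V2) = d := by
            funext i; fin_cases i <;> simp
          by_cases hCc : d 1 + 1 = 2 * d 0
          · -- use relation C'; here d 1 ≥ 3 and d 0 ≥ 2
            have hb3 : 3 ≤ d 1 := by omega
            have hC := relCF (d 0) (d 1)
              (by intro hc; rw [Prod.mk.injEq] at hc; omega)
            have hC' := relCF' (d 0) (d 1)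
              (by intro hc; rw [Prod.mk.injEq] at hc; omega)
            unfold RelC at hC hC'
            rw [hde] at hC hC'
            have hcoef : ((d 1 : ℚ) - 1) ≠ 0 := by
              intro hh
              have h2 : ((d 1 : ℕ) : ℚ) = ((1 : ℕ) : ℚ) := by push_cast; linarith
              have := Nat.cast_inj.mp h2
              omega
            exact mul_left_cancel₀ hcoef
              (hC.trans ((relC_rhs_eq F F' (d 0) (d 1) IH).trans hC'.symm))
          · -- use relation B'
            have hB := relBF (d 0) (d 1)
              (by intro hc; rw [Prod.mk.injEq] at hc; omega)
              (by intro hc; rw [Prod.mk.injEq] at hc; omega)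
            have hB' := relBF' (d 0) (d 1)
              (by intro hc; rw [Prod.mk.injEq] at hc; omega)
              (by intro hc; rw [Prod.mk.injEq] at hc; omega)
            unfold RelB at hB hB'
            rw [hde] at hB hB'
            have hcoef : (2 * (d 0 : ℚ) - 1 - (d 1 : ℚ)) ≠ 0 := by
              intro hh
              have h2 : ((2 * d 0 : ℕ) : ℚ) = ((d 1 + 1 : ℕ) : ℚ) := by push_cast; linarith
              have := Nat.cast_inj.mp h2
              omega
            exact mul_left_cancel₀ hcoef
              (hB.trans ((relB_rhs_eq F F' (d 0) (d 1) IH).trans hB'.symm))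
  | cons h t iht =>
    intro hm
    obtain ⟨hh, ht⟩ := posV2_cons.mp hm
    by_cases hbig : 3 ≤ h 0 ∨ 2 ≤ h 1
    · rw [vBigF d hd _ hm ⟨h, List.mem_cons_self, hbig⟩,
        vBigF' d hd _ hm ⟨h, List.mem_cons_self, hbig⟩]
    · push_neg at hbig
      obtain ⟨hbd0, hbd1⟩ := hbig
      have hne00 : ¬ (h 0 = 0 ∧ h 1 = 0) := fun hc => hh (v2_zero_iff.mpr hc)
      have hs1 : (Pi.single 0 1 : V2) ≠ 0 := by
        intro hc
        have := congrFun hc 0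
        simp at this
      have hcases : (h 0 = 1 ∧ h 1 = 0) ∨ (h 0 = 0 ∧ h 1 = 1) ∨ (h 0 = 2 ∧ h 1 = 0)
          ∨ (h 0 = 1 ∧ h 1 = 1) ∨ (h 0 = 2 ∧ h 1 = 1) := by omega
      rcases hcases with ⟨e0, e1⟩ | ⟨e0, e1⟩ | ⟨e0, e1⟩ | ⟨e0, e1⟩ | ⟨e0, e1⟩
      · have hhe : h = Pi.single 0 1 := by
          funext i; fin_cases i <;> simp [Pi.single_apply, e0, e1]
        rw [hhe, d1F d hd t ht, d1F' d hd t ht, iht ht]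
      · have hhe : h = Pi.single 1 1 := by
          funext i; fin_cases i <;> simp [Pi.single_apply, e0, e1]
        rw [hhe, d2F d hd t ht, d2F' d hd t ht, iht ht]
      · have hhe : h = Pi.single 0 1 + Pi.single (0 : Fin 2) 1 := by
          funext i; fin_cases i <;> simp [Pi.single_apply, Pi.add_apply, e0, e1]
        rw [hhe]
        exact recStep C F F' vParF vNegF recF vParF' vNegF' recF' 0 d
          (Pi.single 0 1) t hd hs1 ht IH
      · have hhe : h = Pi.single 0 1 + Pi.single (1 : Fin 2) 1 := by
          funext i; fin_cases i <;> simp [Pi.single_apply, Pi.add_apply, e0, e1]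
        rw [hhe]
        exact recStep C F F' vParF vNegF recF vParF' vNegF' recF' 1 d
          (Pi.single 0 1) t hd hs1 ht IH
      · have hx11 : (![1, 1] : V2) ≠ 0 := by
          intro hc
          have := congrFun hc 0
          simp at this
        have hhe : h = ![1, 1] + Pi.single (0 : Fin 2) 1 := by
          funext i; fin_cases i <;> simp [Pi.single_apply, Pi.add_apply, e0, e1]
        rw [hhe]
        exact recStep C F F' vParF vNegF recF vParF' vNegF' recF' 0 d
          (![1, 1]) t hd hx11 ht IH
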